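/- Let f : ℝ → ℝ be given by f(t) = (1 − √(1−2t))^3 / (2·(1−2t)^{3/2}) + (1 − √(1−2t))^2 / (1−2t) for t < 1/2. Then the sequence n ↦ f^{(n)}(0) of iterated derivatives of f at 0 is asymptotically equivalent, as n → ∞, to the sequence n ↦ (1/√π)·n^{1/2}·2^n·n!. (The quantity f^{(n)}(0) equals the number ẽ_{n,1} of leaf-labeled general galled trees with n leaves and exactly one gall.) -/

import Mathlib

/-- The exponential generating function `𝔈̃₁(t) = 𝔘(t)³/(2(1−𝔘(t))³) + 𝔘(t)²/(1−𝔘(t))²` with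
`𝔘(t) = 1 − √(1−2t)`, i.e. `f(t) = (1−√(1−2t))³/(2·(1−2t)^{3/2}) + (1−√(1−2t))²/(1−2t)`. -/
noncomputable def f14 : ℝ → ℝ := fun t =>
  (1 - Real.sqrt (1 - 2 * t)) ^ 3 / (2 * (1 - 2 * t) ^ ((3 : ℝ) / 2))
    + (1 - Real.sqrt (1 - 2 * t)) ^ 2 / (1 - 2 * t)

open Real Filter Finset Asymptotics Topology

namespace Stmt14



noncomputable def P (c : ℝ) (n : ℕ) : ℝ := ∏ i ∈ Finset.range n, (c - i)

noncomputable def g : ℝ → ℝ := fun t =>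
  ((1 - 2*t) ^ (-(3:ℝ)/2) - (1 - 2*t) ^ (-1:ℝ) - (1 - 2*t) ^ (-(1:ℝ)/2)
    + (1 - 2*t) ^ (0:ℝ)) / 2

noncomputable def F (n : ℕ) : ℝ → ℝ := fun t =>
  (P (-3/2) n * (1-2*t) ^ (-3/2 - (n:ℝ)) - P (-1) n * (1-2*t) ^ (-1 - (n:ℝ))
    - P (-1/2) n * (1-2*t) ^ (-1/2 - (n:ℝ)) + P 0 n * (1-2*t) ^ (0 - (n:ℝ)))
    * (-2)^n / 2

lemma hasDerivAt_base (p t : ℝ) (ht : 0 < 1 - 2*t) :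
    HasDerivAt (fun t : ℝ => (1 - 2*t) ^ p) (p * (1 - 2*t) ^ (p-1) * (-2)) t := by
  have h1 : HasDerivAt (fun t : ℝ => 1 - 2*t) (-2) t := by
    simpa using ((hasDerivAt_id t).const_mul (2:ℝ)).const_sub 1
  exact (Real.hasDerivAt_rpow_const (Or.inl ht.ne')).comp t h1

lemma key (n : ℕ) : ∀ t : ℝ, 0 < 1 - 2*t → iteratedDeriv n g t = F n t := by
  induction n with
  | zero => intro t ht; simp [g, F, P]
  | succ n ih =>
    intro t ht
    have hopen : IsOpen {s : ℝ | 0 < 1 - 2*s} :=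
      isOpen_lt continuous_const (by continuity)
    have hmem : {s : ℝ | 0 < 1 - 2*s} ∈ nhds t := hopen.mem_nhds ht
    have hev : iteratedDeriv n g =ᶠ[nhds t] F n :=
      Filter.eventuallyEq_of_mem hmem fun s hs => ih s hs
    rw [iteratedDeriv_succ, hev.deriv_eq]
    have hD : HasDerivAt (F n)
        ((P (-3/2) n * ((-3/2 - (n:ℝ)) * (1-2*t) ^ (-3/2 - (n:ℝ) - 1) * (-2))
          - P (-1) n * ((-1 - (n:ℝ)) * (1-2*t) ^ (-1 - (n:ℝ) - 1) * (-2))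
          - P (-1/2) n * ((-1/2 - (n:ℝ)) * (1-2*t) ^ (-1/2 - (n:ℝ) - 1) * (-2))
          + P 0 n * ((0 - (n:ℝ)) * (1-2*t) ^ (0 - (n:ℝ) - 1) * (-2))) * (-2)^n / 2) t := by
      have h1 := (hasDerivAt_base (-3/2 - (n:ℝ)) t ht).const_mul (P (-3/2) n)
      have h2 := (hasDerivAt_base (-1 - (n:ℝ)) t ht).const_mul (P (-1) n)
      have h3 := (hasDerivAt_base (-1/2 - (n:ℝ)) t ht).const_mul (P (-1/2) n)
      have h4 := (hasDerivAt_base (0 - (n:ℝ)) t ht).const_mul (P 0 n)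
      exact ((((h1.sub h2).sub h3).add h4).mul_const ((-2)^n)).div_const 2
    rw [hD.deriv]
    simp only [F, P, Finset.prod_range_succ, Nat.cast_succ]
    rw [show -3/2 - ((n:ℝ)+1) = -3/2 - (n:ℝ) - 1 by ring,
        show -1 - ((n:ℝ)+1) = -1 - (n:ℝ) - 1 by ring,
        show -1/2 - ((n:ℝ)+1) = -1/2 - (n:ℝ) - 1 by ring,
        show 0 - ((n:ℝ)+1) = 0 - (n:ℝ) - 1 by ring]
    ring




lemma aux (s : ℝ) (hs : 0 < s) :
    (1 - s)^3 / (2 * s^3) + (1 - s)^2 / s^2 = ((s^3)⁻¹ - (s^2)⁻¹ - s⁻¹ + 1)/2 := by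
  have hs' : s ≠ 0 := hs.ne'
  field_simp
  ring

lemma f_eq_g : ∀ t : ℝ, 0 < 1 - 2*t → f14 t = g t := by
  intro t ht
  have hs : 0 < Real.sqrt (1 - 2*t) := Real.sqrt_pos.mpr ht
  have hsq : Real.sqrt (1-2*t) ^ 2 = 1 - 2*t := Real.sq_sqrt ht.le
  have h12 : (1 - 2*t) ^ ((1:ℝ)/2) = Real.sqrt (1-2*t) := (Real.sqrt_eq_rpow _).symm
  have h32 : (1 - 2*t) ^ ((3:ℝ)/2) = Real.sqrt (1-2*t) ^ 3 := by
    rw [show ((3:ℝ)/2) = (1/2) * ((3:ℕ):ℝ) by push_cast; ring,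
        Real.rpow_mul ht.le, Real.rpow_natCast, h12]
  have hn3 : (1 - 2*t) ^ (-(3:ℝ)/2) = (Real.sqrt (1-2*t) ^ 3)⁻¹ := by
    rw [show (-(3:ℝ)/2) = -((3:ℝ)/2) by ring, Real.rpow_neg ht.le, h32]
  have hn1 : (1 - 2*t) ^ (-1:ℝ) = ((Real.sqrt (1-2*t))^2)⁻¹ := by
    rw [Real.rpow_neg_one, hsq]
  have hnh : (1 - 2*t) ^ (-(1:ℝ)/2) = (Real.sqrt (1-2*t))⁻¹ := by
    rw [show (-(1:ℝ)/2) = -((1:ℝ)/2) by ring, Real.rpow_neg ht.le, h12]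
  have h0 : (1 - 2*t) ^ (0:ℝ) = 1 := Real.rpow_zero _
  calc f14 t = (1 - Real.sqrt (1-2*t))^3 / (2 * Real.sqrt (1-2*t)^3)
        + (1 - Real.sqrt (1-2*t))^2 / (Real.sqrt (1-2*t))^2 := by
        rw [f14, h32, hsq]
    _ = ((Real.sqrt (1-2*t)^3)⁻¹ - ((Real.sqrt (1-2*t))^2)⁻¹
          - (Real.sqrt (1-2*t))⁻¹ + 1)/2 := aux _ hs
    _ = g t := by rw [g, hn3, hn1, hnh, h0]



noncomputable def W (n : ℕ) : ℝ := ∏ i ∈ Finset.range n, ((i:ℝ) + 1/2)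

lemma W_succ (n : ℕ) : W (n+1) = W n * ((n:ℝ) + 1/2) := by
  simp only [W]; exact Finset.prod_range_succ _ n

lemma P_neg (c : ℝ) (n : ℕ) : P (-c) n = (-1)^n * ∏ i ∈ Finset.range n, (c + i) := by
  calc P (-c) n = ∏ i ∈ Finset.range n, ((-1) * (c + i)) :=
        Finset.prod_congr rfl fun i _ => by ring
    _ = (-1)^n * ∏ i ∈ Finset.range n, (c + i) := by
        rw [Finset.prod_mul_distrib, Finset.prod_const, Finset.card_range]

lemma prod_one_add (n : ℕ) : (∏ i ∈ Finset.range n, ((1:ℝ) + i)) = n.factorial := by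
  induction n with
  | zero => simp
  | succ n ih => rw [Finset.prod_range_succ, ih, Nat.factorial_succ]; push_cast; ring

lemma prod_32 (n : ℕ) : (∏ i ∈ Finset.range n, ((3:ℝ)/2 + i)) = (2*(n:ℝ) + 1) * W n := by
  have h := Finset.prod_range_succ' (fun i => ((i:ℝ) + 1/2)) n
  have h2 : W (n+1) = W n * ((n:ℝ) + 1/2) := W_succ n
  have h1 : W (n+1) = (∏ i ∈ Finset.range n, ((3:ℝ)/2 + i)) * (1/2) := by
    simp only [W]
    rw [h]
    congr 1
    · exact Finset.prod_congr rfl fun i _ => by push_cast; ring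
    · norm_num
  have := h1.symm.trans h2
  nlinarith [this]

lemma P0 (n : ℕ) (hn : 1 ≤ n) : P 0 n = 0 := by
  rw [P]
  exact Finset.prod_eq_zero (Finset.mem_range.mpr hn) (by simp)

lemma W_eq (n : ℕ) : W n = (2*n).factorial / (4^n * n.factorial) := by
  induction n with
  | zero => simp [W]
  | succ n ih =>
    rw [W_succ, ih, show 2*(n+1) = 2*n + 1 + 1 by ring, Nat.factorial_succ, Nat.factorial_succ,
        Nat.factorial_succ]
    have h4 : (4:ℝ)^n ≠ 0 := by positivity
    have hf : (n.factorial : ℝ) ≠ 0 := Nat.cast_ne_zero.mpr n.factorial_ne_zero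
    field_simp
    push_cast
    ring



lemma prod_half (n : ℕ) : (∏ i ∈ Finset.range n, ((1:ℝ)/2 + i)) = W n :=
  Finset.prod_congr rfl fun i _ => by ring

lemma e_val (n : ℕ) (hn : 1 ≤ n) :
    iteratedDeriv n f14 0 = 2^n * ((n:ℝ) * W n - (n.factorial:ℝ)/2) := by
  have hopen : IsOpen {s : ℝ | 0 < 1 - 2*s} :=
    isOpen_lt continuous_const (by continuity)
  have h0 : (0:ℝ) ∈ {s : ℝ | 0 < 1 - 2*s} := by norm_num
  have hev : f14 =ᶠ[nhds 0] g :=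
    Filter.eventuallyEq_of_mem (hopen.mem_nhds h0) fun s hs => f_eq_g s hs
  rw [hev.iteratedDeriv_eq n, key n 0 (by norm_num), F]
  norm_num [Real.one_rpow]
  rw [P_neg, P_neg, P_neg, prod_one_add, prod_32, prod_half, P0 n hn]
  have hm : ((-1:ℝ))^n * (-2:ℝ)^n = 2^n := by
    rw [← mul_pow]; norm_num
  linear_combination (((2*(n:ℝ)+1) * W n - (n.factorial:ℝ) - W n)/2) * hm




lemma stirling_id (n : ℕ) (hn : 1 ≤ n) :
    Real.sqrt n * (W n / n.factorial) =
      Stirling.stirlingSeq (2*n) / (Stirling.stirlingSeq n)^2 := by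
  have hn0 : (0:ℝ) < n := by exact_mod_cast hn
  have hsn : (0:ℝ) < Real.sqrt n := Real.sqrt_pos.mpr hn0
  have hss : Real.sqrt n * Real.sqrt n = (n:ℝ) := Real.mul_self_sqrt hn0.le
  have hs2n : Real.sqrt (2*(n:ℝ)) ^ 2 = 2*(n:ℝ) := Real.sq_sqrt (by positivity)
  have hs2npos : 0 < Real.sqrt (2*(n:ℝ)) := Real.sqrt_pos.mpr (by positivity)
  have he : (0:ℝ) < ((n:ℝ) / Real.exp 1) ^ n := by positivity
  have hf : (n.factorial : ℝ) ≠ 0 := Nat.cast_ne_zero.mpr n.factorial_ne_zero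
  have h4 : (4:ℝ)^n ≠ 0 := by positivity
  rw [W_eq, Stirling.stirlingSeq, Stirling.stirlingSeq]
  have hcast : ((2*n : ℕ):ℝ) = 2*(n:ℝ) := by push_cast; ring
  rw [hcast]
  have hsqrt4n : Real.sqrt (2*(2*(n:ℝ))) = 2 * Real.sqrt n := by
    rw [show 2*(2*(n:ℝ)) = 2^2 * n by ring, Real.sqrt_mul (by norm_num) _,
        Real.sqrt_sq (by norm_num)]
  rw [hsqrt4n]
  have hpow : (2*(n:ℝ) / Real.exp 1) ^ (2*n) = 4^n * (((n:ℝ)/Real.exp 1)^n)^2 := by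
    rw [mul_div_assoc, mul_pow, show ((2:ℝ))^(2*n) = 4^n by rw [pow_mul]; norm_num,
        show ((n:ℝ)/Real.exp 1)^(2*n) = (((n:ℝ)/Real.exp 1)^n)^2 by rw [mul_comm, pow_mul]]
  rw [hpow]
  field_simp
  ring_nf
  rw [Real.sq_sqrt (by positivity : (0:ℝ) ≤ (n:ℝ) * 2), Real.sq_sqrt hn0.le]


end Stmt14

/-- The sequence `n ↦ f14⁽ⁿ⁾(0)` (the number of leaf-labeled general galled trees with `n`
leaves and one gall) is asymptotically equivalent to `n ↦ (1/√π)·n^{1/2}·2ⁿ·n!` as `n → ∞`. -/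
theorem stmt14 :
    Asymptotics.IsEquivalent Filter.atTop
      (fun n : ℕ => iteratedDeriv n f14 0)
      (fun n : ℕ => (1 / Real.sqrt Real.pi) * (n : ℝ) ^ ((1 : ℝ) / 2)
        * 2 ^ n * (Nat.factorial n : ℝ)) := by
  have hπ : (0:ℝ) < Real.sqrt π := Real.sqrt_pos.mpr Real.pi_pos
  have hz : ∀ᶠ n : ℕ in atTop,
      (1 / Real.sqrt Real.pi) * (n : ℝ) ^ ((1 : ℝ) / 2) * 2 ^ n * (Nat.factorial n : ℝ) ≠ 0 := by
    filter_upwards [eventually_ge_atTop 1] with n hn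
    have hn0 : (0:ℝ) < n := by exact_mod_cast hn
    positivity
  rw [Asymptotics.isEquivalent_iff_tendsto_one hz]
  -- limit of the model expression
  have hst := Stirling.tendsto_stirlingSeq_sqrt_pi
  have h2n : Tendsto (fun n : ℕ => 2*n) atTop atTop :=
    tendsto_atTop_mono (fun n => by simpa using Nat.le_mul_of_pos_left n (by norm_num : 0 < 2)) tendsto_id
  have hπ' : Real.sqrt π ≠ 0 := hπ.ne'
  have hA : Tendsto (fun n : ℕ => Stirling.stirlingSeq (2*n) / (Stirling.stirlingSeq n)^2)
      atTop (𝓝 (Real.sqrt π / (Real.sqrt π)^2)) :=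
    (hst.comp h2n).div (hst.pow 2) (pow_ne_zero 2 hπ')
  have hsq : Tendsto (fun n : ℕ => Real.sqrt (n:ℝ)) atTop atTop := by
    simp only [Real.sqrt_eq_rpow]
    exact (tendsto_rpow_atTop (by norm_num : (0:ℝ) < 1/2)).comp tendsto_natCast_atTop_atTop
  have hB : Tendsto (fun n : ℕ => Real.sqrt π / (2 * Real.sqrt (n:ℝ))) atTop (𝓝 0) :=
    Tendsto.div_atTop tendsto_const_nhds (Tendsto.const_mul_atTop (by norm_num) hsq)
  have hlim : Tendsto (fun n : ℕ =>
      Real.sqrt π * (Stirling.stirlingSeq (2*n) / (Stirling.stirlingSeq n)^2)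
        - Real.sqrt π / (2 * Real.sqrt (n:ℝ))) atTop (𝓝 1) := by
    have := (hA.const_mul (Real.sqrt π)).sub hB
    have hval : Real.sqrt π * (Real.sqrt π / (Real.sqrt π)^2) - 0 = 1 := by
      rw [sq]; field_simp; norm_num
    rwa [hval] at this
  refine Tendsto.congr' ?_ hlim
  filter_upwards [eventually_ge_atTop 1] with n hn
  have hn0 : (0:ℝ) < n := by exact_mod_cast hn
  have hsn : 0 < Real.sqrt n := Real.sqrt_pos.mpr hn0
  have hss : Real.sqrt n * Real.sqrt n = (n:ℝ) := Real.mul_self_sqrt hn0.le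
  have hf : (n.factorial : ℝ) ≠ 0 := Nat.cast_ne_zero.mpr n.factorial_ne_zero
  have h2 : ((2:ℝ))^n ≠ 0 := by positivity
  rw [← Stmt14.stirling_id n hn]
  show _ = iteratedDeriv n f14 0 /
      ((1 / Real.sqrt Real.pi) * (n : ℝ) ^ ((1 : ℝ) / 2) * 2 ^ n * (Nat.factorial n : ℝ))
  rw [Stmt14.e_val n hn, show ((n:ℝ)) ^ ((1:ℝ)/2) = Real.sqrt n from (Real.sqrt_eq_rpow _).symm]
  field_simp
  ring_nf
  linear_combination (2 * Stmt14.W n) * hss
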